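/- Let A = A0 + A1ε ∈ DQ^{p×q} and B = B0 + B1ε ∈ DQ^{p×r} be dual quaternion matrices. Set A2 = A1·L_{A0}, B2 = B1 − A1·A0†·B0, C11 = R_{A0}·B2, and A3 = R_{A0}·A2. Then the dual quaternion matrix equation AX = B has a solution X ∈ DQ^{q×r} if and only if R_{A0}·B0 = 0 and R_{A3}·C11 = 0. -/
import Mathlib


open Matrix

/-- Quaternion matrices of size `p × q`. -/
abbrev QM (p q : ℕ) := Matrix (Fin p) (Fin q) (Quaternion ℝ)

/-- `Ad` is a Moore–Penrose inverse of the quaternion matrix `A`. -/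
def IsMP {p q : ℕ} (A : QM p q) (Ad : QM q p) : Prop :=
  A * Ad * A = A ∧ Ad * A * Ad = Ad ∧ (A * Ad)ᴴ = A * Ad ∧ (Ad * A)ᴴ = Ad * A

/-- The dual quaternion matrix `A0 + A1 ε`, realized as a matrix over the
dual numbers (dual quaternions) `DualNumber (Quaternion ℝ)`. -/
noncomputable def dm {p q : ℕ} (A0 A1 : QM p q) :
    Matrix (Fin p) (Fin q) (DualNumber (Quaternion ℝ)) :=
  A0.map TrivSqZeroExt.inl + A1.map TrivSqZeroExt.inr

/-- The rank of a quaternion matrix: the dimension (over `ℍ`) of the left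
`ℍ`-submodule spanned by its rows. -/
noncomputable def qrank {m n : Type*} (A : Matrix m n (Quaternion ℝ)) : ℕ :=
  Module.finrank (Quaternion ℝ)
    (Submodule.span (Quaternion ℝ) (Set.range (fun i : m => fun j : n => A i j)))


lemma dm_fst {p q : ℕ} (A0 A1 : QM p q) : (dm A0 A1).map TrivSqZeroExt.fst = A0 :=
  Matrix.ext fun i j => by simp [dm]

lemma dm_snd {p q : ℕ} (A0 A1 : QM p q) : (dm A0 A1).map TrivSqZeroExt.snd = A1 :=
  Matrix.ext fun i j => by simp [dm]

lemma dm_recon {p q : ℕ} (X : Matrix (Fin p) (Fin q) (DualNumber (Quaternion ℝ))) :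
    dm (X.map TrivSqZeroExt.fst) (X.map TrivSqZeroExt.snd) = X :=
  Matrix.ext fun i j => by
    simp only [dm, Matrix.add_apply, Matrix.map_apply]
    exact TrivSqZeroExt.inl_fst_add_inr_snd_eq _

lemma dm_mul {p q r : ℕ} (A0 A1 : QM p q) (X0 X1 : QM q r) :
    dm A0 A1 * dm X0 X1 = dm (A0 * X0) (A0 * X1 + A1 * X0) :=
  Matrix.ext fun i j => TrivSqZeroExt.ext
    (by simp [dm, Matrix.mul_apply, TrivSqZeroExt.fst_sum, TrivSqZeroExt.fst_mul])
    (by simp [dm, Matrix.mul_apply, TrivSqZeroExt.snd_sum, TrivSqZeroExt.snd_mul,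
      MulOpposite.smul_eq_mul_unop, smul_eq_mul, Finset.sum_add_distrib, add_comm])

lemma dm_inj {p q : ℕ} {A0 A1 B0 B1 : QM p q} (h : dm A0 A1 = dm B0 B1) :
    A0 = B0 ∧ A1 = B1 := by
  refine ⟨?_, ?_⟩
  · rw [← dm_fst A0 A1, h, dm_fst]
  · rw [← dm_snd A0 A1, h, dm_snd]

/-- solvability of the dual quaternion matrix equation `A X = B`. -/
theorem stmt7 {p q r : ℕ}
    (A0 A1 : QM p q) (B0 B1 : QM p r)
    (A0d : QM q p) (hA0d : IsMP A0 A0d)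
    (A2 : QM p q) (hA2 : A2 = A1 * (1 - A0d * A0))
    (B2 : QM p r) (hB2 : B2 = B1 - A1 * A0d * B0)
    (C11 : QM p r) (hC11 : C11 = (1 - A0 * A0d) * B2)
    (A3 : QM p q) (hA3 : A3 = (1 - A0 * A0d) * A2)
    (A3d : QM q p) (hA3d : IsMP A3 A3d) :
    (∃ X : Matrix (Fin q) (Fin r) (DualNumber (Quaternion ℝ)),
        dm A0 A1 * X = dm B0 B1) ↔
      ((1 - A0 * A0d) * B0 = 0 ∧ (1 - A3 * A3d) * C11 = 0) := by
  have hz0 : (1 - A0 * A0d) * A0 = 0 := by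
    rw [Matrix.sub_mul, Matrix.one_mul, hA0d.1, sub_self]
  have hz3 : (1 - A3 * A3d) * A3 = 0 := by
    rw [Matrix.sub_mul, Matrix.one_mul, hA3d.1, sub_self]
  constructor
  · rintro ⟨X, hX⟩
    set X0 := X.map TrivSqZeroExt.fst with hX0
    set X1 := X.map TrivSqZeroExt.snd with hX1
    rw [← dm_recon X, dm_mul] at hX
    obtain ⟨h1, h2⟩ := dm_inj hX
    constructor
    · rw [← h1, ← Matrix.mul_assoc, hz0, Matrix.zero_mul]
    · have hC : C11 = A3 * X0 := by
        rw [hC11, hB2, hA3, hA2, ← h1, ← h2]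
        have e1 : (1 - A0 * A0d) * (A0 * X1 + A1 * X0 - A1 * A0d * (A0 * X0)) =
            (1 - A0 * A0d) * A0 * X1 +
              (1 - A0 * A0d) * (A1 * X0 - A1 * A0d * (A0 * X0)) := by
          simp only [Matrix.mul_add, Matrix.mul_sub, Matrix.add_mul, Matrix.sub_mul,
            Matrix.one_mul, Matrix.mul_one, Matrix.mul_assoc]
          abel
        rw [e1, hz0, Matrix.zero_mul, zero_add]
        simp only [Matrix.mul_add, Matrix.mul_sub, Matrix.add_mul, Matrix.sub_mul,
          Matrix.one_mul, Matrix.mul_one, Matrix.mul_assoc]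
      rw [hC, ← Matrix.mul_assoc, hz3, Matrix.zero_mul]
  · rintro ⟨hb0, hc⟩
    have hb0' : A0 * A0d * B0 = B0 := by
      rw [Matrix.sub_mul, Matrix.one_mul, sub_eq_zero] at hb0; exact hb0.symm
    have hc' : A3 * A3d * C11 = C11 := by
      rw [Matrix.sub_mul, Matrix.one_mul, sub_eq_zero] at hc; exact hc.symm
    set Y : QM q r := A3d * C11 with hY
    set X0 : QM q r := A0d * B0 + (1 - A0d * A0) * Y with hX0
    set X1 : QM q r := A0d * (B2 - A2 * Y) with hX1
    refine ⟨dm X0 X1, ?_⟩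
    rw [dm_mul]
    have h1 : A0 * X0 = B0 := by
      have hL : A0 * (1 - A0d * A0) = 0 := by
        rw [Matrix.mul_sub, Matrix.mul_one, ← Matrix.mul_assoc, hA0d.1, sub_self]
      rw [hX0, Matrix.mul_add, ← Matrix.mul_assoc, ← Matrix.mul_assoc, hL,
        Matrix.zero_mul, add_zero, hb0']
    have h2 : A0 * X1 + A1 * X0 = B1 := by
      have step : A0 * X1 + A1 * X0 =
          A1 * A0d * B0 + A0 * A0d * B2 + (1 - A0 * A0d) * A2 * Y := by
        rw [hX0, hX1, hA2]
        simp only [Matrix.mul_add, Matrix.mul_sub, Matrix.add_mul, Matrix.sub_mul,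
          Matrix.one_mul, Matrix.mul_one, Matrix.mul_assoc]
        abel
      have hA3Y : (1 - A0 * A0d) * A2 * Y = C11 := by
        rw [← hA3, hY, ← Matrix.mul_assoc, hc']
      rw [step, hA3Y, hC11, hB2]
      simp only [Matrix.mul_add, Matrix.mul_sub, Matrix.add_mul, Matrix.sub_mul,
        Matrix.one_mul, Matrix.mul_one, Matrix.mul_assoc]
      abel
    rw [h1, h2]
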